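/- Let A be a commutative Noetherian ring, let I be an ideal of A containing a nonzerodivisor, and let J, K be integrally closed ideals of A. If \overline{IJ} = \overline{IK}, then J = K. That is, the operation I*J = \overline{IJ} is cancellative on integrally closed ideals containing nonzerodivisors. -/

import Mathlib

/-- `x` satisfies an equation of integral dependence over the ideal `I`:
`x ^ n + a 1 * x ^ (n-1) + ⋯ + a (n-1) * x + a n = 0` with `a i ∈ I ^ i`. -/
def IsIntegralOverIdeal {A : Type*} [CommRing A] (I : Ideal A) (x : A) : Prop :=
  ∃ n : ℕ, 0 < n ∧ ∃ a : ℕ → A, (∀ i, 1 ≤ i → i ≤ n → a i ∈ I ^ i) ∧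
    x ^ n + ∑ i ∈ Finset.Icc 1 n, a i * x ^ (n - i) = 0

/-- The integral closure `\overline{I}` of an ideal `I`.  The set of elements integral
over `I` is in fact an ideal, so taking the ideal span of this set does not change it. -/
def intCl {A : Type*} [CommRing A] (I : Ideal A) : Ideal A :=
  Ideal.span {x | IsIntegralOverIdeal I x}

section Aux

variable {A : Type*} [CommRing A]

/-- Every element of `I` is integral over `I` (via a degree-one equation). -/
lemma isIntegralOverIdeal_of_mem {I : Ideal A} {y : A} (hy : y ∈ I) :
    IsIntegralOverIdeal I y := by
  refine ⟨1, one_pos, fun _ => -y, ?_, ?_⟩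
  · intro i h1 h2
    have : i = 1 := le_antisymm h2 h1
    subst this
    simpa using I.neg_mem hy
  · simp [Finset.Icc_self]

lemma le_intCl (I : Ideal A) : I ≤ intCl I := fun y hy =>
  Ideal.subset_span (isIntegralOverIdeal_of_mem hy)

lemma mem_intCl_of_isIntegral {I : Ideal A} {x : A} (hx : IsIntegralOverIdeal I x) :
    x ∈ intCl I :=
  Ideal.subset_span hx

/-- Power stabilization: if `Y` is a finite set of elements integral over `L`, and
`T = L ⊔ span Y`, then `T ^ (e+1) ≤ L * T ^ e` for all large `e`. -/
lemma pow_stab (L : Ideal A) (Y : Finset A)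
    (hY : ∀ y ∈ Y, IsIntegralOverIdeal L y) :
    ∃ D : ℕ, ∀ e : ℕ, D ≤ e →
      (L ⊔ Ideal.span (Y : Set A)) ^ (e + 1) ≤ L * (L ⊔ Ideal.span (Y : Set A)) ^ e := by
  classical
  induction Y using Finset.induction_on with
  | empty =>
      refine ⟨0, fun e _ => ?_⟩
      simp only [Finset.coe_empty, Ideal.span_empty, sup_bot_eq]
      rw [pow_succ, mul_comm]
  | @insert z Y hzY ih =>
      obtain ⟨D, hD⟩ := ih (fun y hy => hY y (Finset.mem_insert_of_mem hy))
      obtain ⟨n, hn, a, ha, heq⟩ := hY z (Finset.mem_insert_self z Y)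
      set T := L ⊔ Ideal.span (Y : Set A) with hT
      set Z := Ideal.span ({z} : Set A) with hZ
      have hTZ : L ⊔ Ideal.span (↑(insert z Y) : Set A) = T ⊔ Z := by
        rw [Finset.coe_insert, Ideal.span_insert, hT, hZ]
        rw [← sup_assoc, sup_comm L (Ideal.span {z}), sup_assoc, sup_comm (Ideal.span {z})]
      have hLTZ : L ≤ T ⊔ Z := le_sup_left.trans le_sup_left
      have hZTZ : Z ≤ T ⊔ Z := le_sup_right
      -- the integral equation for z gives: Z ^ n ≤ L * (T ⊔ Z) ^ (n - 1)
      have hZn : Z ^ n ≤ L * (T ⊔ Z) ^ (n - 1) := by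
        rw [hZ, Ideal.span_singleton_pow, Ideal.span_le, Set.singleton_subset_iff]
        have hz : (z : A) ^ n = -∑ i ∈ Finset.Icc 1 n, a i * z ^ (n - i) :=
          eq_neg_of_add_eq_zero_left heq
        rw [hz]
        refine Submodule.neg_mem _ (Submodule.sum_mem _ ?_)
        intro i hi
        obtain ⟨hi1, hi2⟩ := Finset.mem_Icc.mp hi
        obtain ⟨i', rfl⟩ : ∃ i', i = i' + 1 := ⟨i - 1, by omega⟩
        have h2 : a (i' + 1) * z ^ (n - (i' + 1)) ∈ (L ^ (i' + 1)) * Z ^ (n - (i' + 1)) :=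
          Ideal.mul_mem_mul (ha _ hi1 hi2)
            (Ideal.pow_mem_pow (Ideal.mem_span_singleton_self z) _)
        refine Set.mem_of_subset_of_mem ?_ h2
        have e1 : L ^ (i' + 1) * Z ^ (n - (i' + 1)) = L * (L ^ i' * Z ^ (n - (i' + 1))) := by
          rw [pow_succ, mul_comm (L ^ i') L, mul_assoc]
        rw [e1]
        refine Ideal.mul_mono_right ?_
        have h3 : L ^ i' * Z ^ (n - (i' + 1)) ≤ (T ⊔ Z) ^ i' * (T ⊔ Z) ^ (n - (i' + 1)) :=
          Ideal.mul_mono (pow_le_pow_left' hLTZ i') (pow_le_pow_left' hZTZ _)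
        refine h3.trans (le_of_eq ?_)
        rw [← pow_add]
        congr 1
        omega
      refine ⟨D + n, fun e he => ?_⟩
      rw [hTZ]
      have hexp : (T ⊔ Z) ^ (e + 1) = ∑ k ∈ Finset.range (e + 2),
          T ^ k * Z ^ (e + 1 - k) * ((e + 1).choose k : Ideal A) := by
        rw [← Ideal.add_eq_sup, add_pow]
      rw [hexp, Ideal.sum_eq_sup]
      refine Finset.sup_le ?_
      intro k hk
      have hk' : k ≤ e + 1 := by
        have := Finset.mem_range.mp hk; omega
      refine Ideal.mul_le_left.trans ?_
      by_cases hkD : D + 1 ≤ k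
      · -- use the induction hypothesis on T
        have h1 : T ^ k ≤ L * T ^ (k - 1) := by
          have h := hD (k - 1) (by omega)
          have ek : k - 1 + 1 = k := by omega
          rwa [ek] at h
        calc T ^ k * Z ^ (e + 1 - k)
            ≤ (L * T ^ (k - 1)) * Z ^ (e + 1 - k) := Ideal.mul_mono_left h1
          _ = L * (T ^ (k - 1) * Z ^ (e + 1 - k)) := by rw [mul_assoc]
          _ ≤ L * (T ⊔ Z) ^ e := by
              refine Ideal.mul_mono_right ?_
              have h3 : T ^ (k - 1) * Z ^ (e + 1 - k)
                  ≤ (T ⊔ Z) ^ (k - 1) * (T ⊔ Z) ^ (e + 1 - k) :=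
                Ideal.mul_mono (pow_le_pow_left' le_sup_left _) (pow_le_pow_left' hZTZ _)
              refine h3.trans (le_of_eq ?_)
              rw [← pow_add]
              congr 1
              omega
      · -- here e + 1 - k ≥ n, use the integral equation for z
        have hmn : n ≤ e + 1 - k := by omega
        have h2 : Z ^ (e + 1 - k) ≤ Z ^ (e + 1 - k - n) * (L * (T ⊔ Z) ^ (n - 1)) := by
          have e2 : Z ^ (e + 1 - k) = Z ^ (e + 1 - k - n) * Z ^ n := by
            rw [← pow_add]; congr 1; omega
          rw [e2]
          exact Ideal.mul_mono_right hZn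
        calc T ^ k * Z ^ (e + 1 - k)
            ≤ T ^ k * (Z ^ (e + 1 - k - n) * (L * (T ⊔ Z) ^ (n - 1))) :=
              Ideal.mul_mono_right h2
          _ = L * (T ^ k * Z ^ (e + 1 - k - n) * (T ⊔ Z) ^ (n - 1)) := by ring
          _ ≤ L * (T ⊔ Z) ^ e := by
              refine Ideal.mul_mono_right ?_
              have h3 : T ^ k * Z ^ (e + 1 - k - n) * (T ⊔ Z) ^ (n - 1)
                  ≤ (T ⊔ Z) ^ k * (T ⊔ Z) ^ (e + 1 - k - n) * (T ⊔ Z) ^ (n - 1) :=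
                Ideal.mul_mono (Ideal.mul_mono (pow_le_pow_left' le_sup_left _)
                  (pow_le_pow_left' hZTZ _)) le_rfl
              refine h3.trans (le_of_eq ?_)
              rw [← pow_add, ← pow_add]
              congr 1
              omega

/-- The key lemma: if `I` contains a nonzerodivisor `r` and `x * I ⊆ intCl (I * J)`,
then `x` is integral over `J`.  (Determinant trick.) -/
lemma isIntegral_of_smul_mem_intCl [IsNoetherianRing A] (I J : Ideal A) (r : A)
    (hrI : r ∈ I) (hr : r ∈ nonZeroDivisors A) (x : A)
    (hx : ∀ b ∈ I, x * b ∈ intCl (I * J)) :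
    IsIntegralOverIdeal J x := by
  classical
  set L : Ideal A := I * J with hL
  set S : Set A := {y | IsIntegralOverIdeal L y} with hS
  -- find a finite set `Y ⊆ S` with `x * I ⊆ span Y`
  obtain ⟨G, hG⟩ : I.FG := IsNoetherian.noetherian I
  have hmem : ∀ g : G, x * (g : A) ∈ Ideal.span S := by
    intro g
    exact hx _ (hG ▸ Ideal.subset_span g.2)
  have hmem' : ∀ g : G, ∃ c : A →₀ A, ↑c.support ⊆ S ∧ (c.sum fun mi r => r • mi) = x * g :=
    fun g => Submodule.mem_span_set.mp (hmem g)
  choose c hc1 hc2 using hmem'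
  set Y : Finset A := G.attach.biUnion (fun g => (c g).support) with hY
  have hYS : ∀ y ∈ Y, IsIntegralOverIdeal L y := by
    intro y hy
    obtain ⟨g, _, hyg⟩ := Finset.mem_biUnion.mp hy
    exact hc1 g hyg
  have hxI : ∀ b ∈ I, x * b ∈ Ideal.span (Y : Set A) := by
    intro b hb
    have hIle : I ≤ Submodule.comap (LinearMap.lsmul A A x) (Ideal.span (Y : Set A)) := by
      rw [← hG, Ideal.span_le]
      intro g hg
      have : x * g ∈ Ideal.span (Y : Set A) := by
        rw [← hc2 ⟨g, hg⟩]
        refine Submodule.sum_mem _ ?_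
        intro y hy
        refine Submodule.smul_mem _ _ (Ideal.subset_span ?_)
        exact Finset.mem_coe.mpr (Finset.mem_biUnion.mpr ⟨⟨g, hg⟩, Finset.mem_attach _ _, hy⟩)
      simpa using this
    simpa using hIle hb
  set T : Ideal A := L ⊔ Ideal.span (Y : Set A) with hT
  obtain ⟨D, hD⟩ := pow_stab L Y hYS
  set d : ℕ := D + 1 with hd
  have hTd : T ^ (d + 1) ≤ L * T ^ d := hD d (by omega)
  -- the finitely generated module used for the determinant trick
  set M : Ideal A := I * T ^ d with hM
  haveI : Module.Finite A M := Module.Finite.iff_fg.mpr (IsNoetherian.noetherian M)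
  -- multiplication by `x` maps `M` into `J * M`
  have hxM : ∀ w ∈ M, x * w ∈ J * M := by
    have step1 : Ideal.span {x} * I ≤ T := by
      rw [Ideal.mul_le]
      intro s hs b hb
      obtain ⟨u, rfl⟩ := Ideal.mem_span_singleton'.mp hs
      have : u * x * b = u * (x * b) := by ring
      rw [this]
      exact le_sup_right (α := Ideal A) (Ideal.mul_mem_left _ u (hxI b hb))
    have step2 : Ideal.span {x} * M ≤ J * M := by
      calc Ideal.span {x} * M = (Ideal.span {x} * I) * T ^ d := by rw [hM, mul_assoc]
        _ ≤ T * T ^ d := Ideal.mul_mono_left step1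
        _ = T ^ (d + 1) := (mul_comm T (T ^ d)).trans (pow_succ T d).symm
        _ ≤ L * T ^ d := hTd
        _ = J * M := by rw [hL, hM]; ring
    intro w hw
    exact step2 (Ideal.mul_mem_mul (Ideal.mem_span_singleton_self x) hw)
  -- Cayley–Hamilton
  set f : Module.End A M := algebraMap A (Module.End A M) x with hf
  have hrange : LinearMap.range f ≤ J • (⊤ : Submodule A M) := by
    rintro _ ⟨w, rfl⟩
    rw [Submodule.mem_smul_top_iff]
    have : (f w : A) = x * (w : A) := rfl
    rw [this, Ideal.smul_eq_mul]
    exact hxM _ w.2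
  obtain ⟨p, hpmonic, -, hpcoeff, hp0⟩ :=
    LinearMap.exists_monic_and_coeff_mem_pow_and_aeval_eq_zero_of_range_le_smul A f J hrange
  -- evaluate the polynomial identity at the witness `r * (x * r) ^ d ∈ M`
  have hw0 : r * (x * r) ^ d ∈ M := by
    refine Ideal.mul_mem_mul hrI (Ideal.pow_mem_pow ?_ d)
    exact le_sup_right (α := Ideal A) (hxI r hrI)
  have heval : Polynomial.eval x p * (r * (x * r) ^ d) = 0 := by
    have h1 : Polynomial.aeval f p = algebraMap A (Module.End A M) (Polynomial.eval x p) := by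
      rw [hf, Polynomial.aeval_algebraMap_apply]
      simp
    have h2 : (Polynomial.aeval f p) (⟨r * (x * r) ^ d, hw0⟩ : M) = 0 := by
      rw [hp0]; rfl
    rw [h1] at h2
    exact congrArg Subtype.val h2
  -- divide by the nonzerodivisor `r ^ (d + 1)`
  have hcancel : Polynomial.eval x p * x ^ d = 0 := by
    have hr' : r ^ (d + 1) ∈ nonZeroDivisors A := pow_mem hr (d + 1)
    apply mem_nonZeroDivisors_iff_right.mp hr'
    calc Polynomial.eval x p * x ^ d * r ^ (d + 1)
        = Polynomial.eval x p * (r * (x * r) ^ d) := by ring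
      _ = 0 := heval
  -- assemble the integral equation for `x` over `J`
  set m : ℕ := p.natDegree with hm
  refine ⟨m + d, by omega, fun i => if i ≤ m then p.coeff (m - i) else 0, ?_, ?_⟩
  · intro i h1 h2
    by_cases him : i ≤ m
    · simp only [him, if_true]
      have := hpcoeff (m - i)
      have e1 : m - (m - i) = i := by omega
      rwa [e1] at this
    · simp only [him, if_false]
      exact Submodule.zero_mem _
  · have hsplit : ∑ i ∈ Finset.Icc 1 (m + d),
        (if i ≤ m then p.coeff (m - i) else 0) * x ^ (m + d - i)
        = ∑ i ∈ Finset.Icc 1 m, p.coeff (m - i) * x ^ (m + d - i) := by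
      rw [← Finset.sum_subset (Finset.Icc_subset_Icc_right (by omega : m ≤ m + d))]
      · refine Finset.sum_congr rfl ?_
        intro i hi
        obtain ⟨_, hi2⟩ := Finset.mem_Icc.mp hi
        simp [hi2]
      · intro i hi hni
        have hi' := Finset.mem_Icc.mp hi
        have : ¬ i ≤ m := fun him => hni (Finset.mem_Icc.mpr ⟨hi'.1, him⟩)
        simp [this]
    rw [hsplit]
    -- rewrite everything as `x ^ d * eval x p`
    have heval2 : Polynomial.eval x p = ∑ k ∈ Finset.range (m + 1), p.coeff k * x ^ k := by
      conv_lhs => rw [Polynomial.eval_eq_sum_range]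
    have hreindex : ∑ i ∈ Finset.Icc 1 m, p.coeff (m - i) * x ^ (m + d - i)
        = ∑ k ∈ Finset.range m, p.coeff k * x ^ (k + d) := by
      refine Finset.sum_nbij' (fun i => m - i) (fun k => m - k) ?_ ?_ ?_ ?_ ?_
      · intro i hi
        have := Finset.mem_Icc.mp hi
        exact Finset.mem_range.mpr (by omega)
      · intro k hk
        have := Finset.mem_range.mp hk
        exact Finset.mem_Icc.mpr (by omega)
      · intro i hi
        have := Finset.mem_Icc.mp hi
        omega
      · intro k hk
        have := Finset.mem_range.mp hk
        omega
      · intro i hi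
        obtain ⟨h1, h2⟩ := Finset.mem_Icc.mp hi
        have he : m + d - i = m - i + d := by omega
        rw [he]
    rw [hreindex]
    have htop : x ^ (m + d) = p.coeff m * x ^ (m + d) := by
      rw [Polynomial.Monic.coeff_natDegree hpmonic, one_mul]
    rw [htop]
    calc p.coeff m * x ^ (m + d) + ∑ k ∈ Finset.range m, p.coeff k * x ^ (k + d)
        = ∑ k ∈ Finset.range (m + 1), p.coeff k * x ^ (k + d) := by
          rw [Finset.sum_range_succ]; ring
      _ = (∑ k ∈ Finset.range (m + 1), p.coeff k * x ^ k) * x ^ d := by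
          rw [Finset.sum_mul]
          refine Finset.sum_congr rfl ?_
          intro k _
          rw [pow_add]; ring
      _ = Polynomial.eval x p * x ^ d := by rw [← heval2]
      _ = 0 := hcancel

end Aux

/-- Cancellativity: if `I` contains a nonzerodivisor and `J, K` are integrally closed
with `intCl (I*J) = intCl (I*K)`, then `J = K`. -/
theorem star_cancel {A : Type*} [CommRing A] [IsNoetherianRing A] (I J K : Ideal A)
    (hI : ∃ r ∈ I, r ∈ nonZeroDivisors A)
    (hJ : intCl J = J) (hK : intCl K = K)
    (h : intCl (I * J) = intCl (I * K)) : J = K := by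
  obtain ⟨r, hrI, hr⟩ := hI
  have main : ∀ P Q : Ideal A, intCl (I * P) ≤ intCl (I * Q) → intCl Q = Q → P ≤ Q := by
    intro P Q hle hQ x hxP
    rw [← hQ]
    refine mem_intCl_of_isIntegral ?_
    refine isIntegral_of_smul_mem_intCl I Q r hrI hr x ?_
    intro b hb
    have : x * b ∈ I * P := by
      rw [mul_comm x b]
      exact Ideal.mul_mem_mul hb hxP
    exact hle (le_intCl _ this)
  exact le_antisymm (main J K h.le hK) (main K J h.ge hJ)
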